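/- Let U be a nonempty open convex cone in E = ℝ^n and let φ : E → ℝ be continuous on E and differentiable on U, with differential F(u) = dφ(u) ∈ E* for u ∈ U. Assume: (1) φ is concave on U; (2) φ is positively 1-homogeneous; (3) φ > 0 on U and φ = 0 on E ∖ U. Let C = {l ∈ E* : l(u) ≥ 0 for all u ∈ U} be the closed dual cone of U, with interior C°. Then C° ⊆ {r • F(u) : r ∈ ℝ, r > 0, u ∈ U} ⊆ C. -/

import Mathlib

/-- Tangent line inequality for concave functions. -/
lemma concave_tangent_le {E : Type*} [NormedAddCommGroup E] [NormedSpace ℝ E]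
    {s : Set E} {φ : E → ℝ} (hconc : ConcaveOn ℝ s φ) {u y : E}
    (hu : u ∈ s) (hy : y ∈ s) (hd : DifferentiableAt ℝ φ u) :
    φ y ≤ φ u + fderiv ℝ φ u (y - u) := by
  set g : ℝ → ℝ := fun t => φ (u + t • (y - u)) with hg
  have hcurve : HasDerivAt (fun t : ℝ => u + t • (y - u)) (y - u) 0 := by
    simpa using ((hasDerivAt_id (0:ℝ)).smul_const (y - u)).const_add u
  have hgd : HasDerivAt g (fderiv ℝ φ u (y - u)) 0 := by
    have h0 : u + (0:ℝ) • (y - u) = u := by simp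
    have hd' : HasFDerivAt φ (fderiv ℝ φ u) (u + (0:ℝ) • (y - u)) := by
      rw [h0]; exact hd.hasFDerivAt
    exact hd'.comp_hasDerivAt (0:ℝ) hcurve
  have hslope : ∀ t : ℝ, t ∈ Set.Ioo (0:ℝ) 1 → φ y - φ u ≤ slope g 0 t := by
    intro t ht
    have h1 : (1 - t) ≥ 0 := by linarith [ht.2]
    have hcomb := hconc.2 hu hy h1 (le_of_lt ht.1) (by ring)
    have heq : (1 - t) • u + t • y = u + t • (y - u) := by
      simp [smul_sub, sub_smul]; abel
    rw [heq] at hcomb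
    have hgt : g t - g 0 ≥ t * (φ y - φ u) := by
      simp only [hg, zero_smul, add_zero, smul_eq_mul] at hcomb ⊢
      nlinarith [hcomb]
    rw [slope_def_field]
    have : (g t - g 0) / t ≥ φ y - φ u := by
      rw [ge_iff_le, le_div_iff₀ ht.1]; linarith [hgt]
    simpa [div_eq_inv_mul, sub_div] using this
  have htend : Filter.Tendsto (slope g 0) (nhdsWithin 0 (Set.Ioo (0:ℝ) 1))
      (nhds (fderiv ℝ φ u (y - u))) := by
    have := hasDerivAt_iff_tendsto_slope.1 hgd
    exact this.mono_left (nhdsWithin_mono _ (fun t ht => ne_of_gt ht.1))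
  have hne : (nhdsWithin (0:ℝ) (Set.Ioo 0 1)).NeBot := by
    apply mem_closure_iff_nhdsWithin_neBot.1
    rw [closure_Ioo one_ne_zero.symm]; exact ⟨le_refl 0, zero_le_one⟩
  have := ge_of_tendsto htend (by
    filter_upwards [self_mem_nhdsWithin] with t ht using hslope t ht)
  linarith

set_option maxHeartbeats 2000000 in
/-- Corollary of multiplicative Legendre duality: the interior of the closed dual cone `C` of
`U` is contained in the set of positive multiples `r • dφ(u)` (`r > 0`, `u ∈ U`), which in
turn is contained in `C`. -/
theorem stmt2 (n : ℕ) (U : Set (Fin n → ℝ)) (hne : U.Nonempty) (hopen : IsOpen U)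
    (hconv : Convex ℝ U) (hcone : ∀ x ∈ U, ∀ t : ℝ, 0 < t → t • x ∈ U)
    (φ : (Fin n → ℝ) → ℝ) (hcont : Continuous φ)
    (hdiff : ∀ u ∈ U, DifferentiableAt ℝ φ u)
    (hconc : ConcaveOn ℝ U φ)
    (hhom : ∀ t : ℝ, 0 < t → ∀ x : Fin n → ℝ, φ (t • x) = t * φ x)
    (hpos : ∀ u ∈ U, 0 < φ u)
    (hzero : ∀ x : Fin n → ℝ, x ∉ U → φ x = 0) :
    interior {l : (Fin n → ℝ) →L[ℝ] ℝ | ∀ u ∈ U, 0 ≤ l u} ⊆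
        {l : (Fin n → ℝ) →L[ℝ] ℝ | ∃ r : ℝ, 0 < r ∧ ∃ u ∈ U, l = r • fderiv ℝ φ u} ∧
      {l : (Fin n → ℝ) →L[ℝ] ℝ | ∃ r : ℝ, 0 < r ∧ ∃ u ∈ U, l = r • fderiv ℝ φ u} ⊆
        {l : (Fin n → ℝ) →L[ℝ] ℝ | ∀ u ∈ U, 0 ≤ l u} := by
  -- 0 ∉ U
  have h0U : (0 : Fin n → ℝ) ∉ U := by
    intro h
    have h1 := hpos 0 h
    have h2 := hhom 2 (by norm_num) 0
    simp only [smul_zero] at h2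
    linarith
  -- values in U are positive under any dual functional... first the easy inclusion.
  have hFpos : ∀ u ∈ U, ∀ v ∈ U, φ v ≤ fderiv ℝ φ u v := by
    intro u hu v hv
    have hdu := hdiff u hu
    have h2u : (2:ℝ) • u ∈ U := hcone u hu 2 (by norm_num)
    have ht1 := concave_tangent_le hconc hu h2u hdu
    have ht2 := concave_tangent_le hconc hu hv hdu
    have e1 : ((2:ℝ) • u - u) = u := by
      rw [two_smul]; abel
    rw [hhom 2 (by norm_num) u, e1] at ht1
    -- ht1 : 2 * φ u ≤ φ u + F u u, so φ u ≤ F u u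
    have hFuu : φ u ≤ fderiv ℝ φ u u := by linarith
    have hmap : fderiv ℝ φ u (v - u) = fderiv ℝ φ u v - fderiv ℝ φ u u := map_sub _ _ _
    rw [hmap] at ht2
    linarith
  constructor
  · -- hard inclusion
    intro l hl
    have hlC : l ∈ {l : (Fin n → ℝ) →L[ℝ] ℝ | ∀ u ∈ U, 0 ≤ l u} := interior_subset hl
    -- membership in C implies nonneg on closure
    have hclosnn : ∀ m : (Fin n → ℝ) →L[ℝ] ℝ, (∀ u ∈ U, 0 ≤ m u) →
        ∀ x ∈ closure U, 0 ≤ m x := by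
      intro m hm x hx
      have : closure U ⊆ {x | 0 ≤ m x} :=
        closure_minimal hm (isClosed_le continuous_const m.continuous)
      exact this hx
    -- l is strictly positive on closure U away from 0
    have hlpos : ∀ x ∈ closure U, x ≠ 0 → 0 < l x := by
      intro x hx hx0
      by_contra hle
      push_neg at hle
      obtain ⟨i, hi⟩ : ∃ i, x i ≠ 0 := by
        by_contra hall; push_neg at hall; exact hx0 (funext hall)
      set c : (Fin n → ℝ) →L[ℝ] ℝ := (x i) • (ContinuousLinearMap.proj i) with hc
      have hcx : c x = (x i)^2 := by simp [hc, sq]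
      obtain ⟨ε, hε, hball⟩ := Metric.isOpen_iff.1 isOpen_interior l hl
      set δ : ℝ := ε / (2 * (‖c‖ + 1)) with hδ
      have hnc : (0:ℝ) < ‖c‖ + 1 := by positivity
      have hδpos : 0 < δ := by positivity
      have hmem : l - δ • c ∈ Metric.ball l ε := by
        rw [Metric.mem_ball, dist_eq_norm]
        have he : l - δ • c - l = -(δ • c) := by abel
        rw [he, norm_neg]
        calc ‖δ • c‖ ≤ ‖δ‖ * ‖c‖ := norm_smul_le δ c
          _ = δ * ‖c‖ := by rw [Real.norm_eq_abs, abs_of_pos hδpos]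
          _ < δ * (2 * (‖c‖ + 1)) := by
              apply mul_lt_mul_of_pos_left _ hδpos
              nlinarith [norm_nonneg c]
          _ = ε := by rw [hδ]; field_simp
      have hmC : l - δ • c ∈ {l : (Fin n → ℝ) →L[ℝ] ℝ | ∀ u ∈ U, 0 ≤ l u} :=
        interior_subset (hball hmem)
      have hnn := hclosnn _ hmC x hx
      have happ : (l - δ • c) x = l x - δ * ((x i)^2) := by
        rw [ContinuousLinearMap.sub_apply, ContinuousLinearMap.smul_apply, hcx,
          smul_eq_mul]
      rw [happ] at hnn
      have hsq : 0 < (x i)^2 := by positivity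
      nlinarith
    -- closure U is a cone
    have hconeC : ∀ x ∈ closure U, ∀ t : ℝ, 0 < t → t • x ∈ closure U := by
      intro x hx t ht
      have hmt : Set.MapsTo (fun y => t • y) U U := fun y hy => hcone y hy t ht
      exact hmt.closure (continuous_const_smul t) hx
    obtain ⟨u0, hu0⟩ := hne
    have hu0ne : u0 ≠ 0 := fun h => h0U (h ▸ hu0)
    have hlu0 : 0 < l u0 := hlpos u0 (subset_closure hu0) hu0ne
    have hw0 : (l u0)⁻¹ • u0 ∈ U := hcone u0 hu0 _ (inv_pos.2 hlu0)
    have hlw0 : l ((l u0)⁻¹ • u0) = 1 := by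
      rw [map_smul, smul_eq_mul, inv_mul_cancel₀ (ne_of_gt hlu0)]
    -- compact slice K
    set K : Set (Fin n → ℝ) := closure U ∩ l ⁻¹' {1} with hK
    -- sphere intersection
    set S : Set (Fin n → ℝ) := closure U ∩ Metric.sphere 0 1 with hS
    have hScomp : IsCompact S := (isCompact_sphere 0 1).inter_left isClosed_closure
    have hSne : S.Nonempty := by
      refine ⟨‖u0‖⁻¹ • u0, ?_, ?_⟩
      · exact subset_closure (hcone u0 hu0 _ (inv_pos.2 (norm_pos_iff.2 hu0ne)))
      · simp only [Metric.mem_sphere, dist_zero_right, norm_smul, Real.norm_eq_abs,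
          abs_of_pos (inv_pos.2 (norm_pos_iff.2 hu0ne))]
        exact inv_mul_cancel₀ (ne_of_gt (norm_pos_iff.2 hu0ne))
    obtain ⟨z, hzS, hzmin⟩ := hScomp.exists_isMinOn hSne l.continuous.continuousOn
    have hzne : z ≠ 0 := by
      intro h
      have := hzS.2
      rw [h] at this
      simp at this
    have hlz : 0 < l z := hlpos z hzS.1 hzne
    -- K is bounded
    have hKsub : K ⊆ Metric.closedBall 0 (l z)⁻¹ := by
      intro x hx
      have hx1 : l x = 1 := hx.2
      have hxne : x ≠ 0 := by
        intro h; rw [h, map_zero] at hx1; norm_num at hx1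
      have hxn : 0 < ‖x‖ := norm_pos_iff.2 hxne
      have hxS : ‖x‖⁻¹ • x ∈ S := by
        refine ⟨hconeC x hx.1 _ (inv_pos.2 hxn), ?_⟩
        simp only [Metric.mem_sphere, dist_zero_right, norm_smul, Real.norm_eq_abs,
          abs_of_pos (inv_pos.2 hxn)]
        exact inv_mul_cancel₀ (ne_of_gt hxn)
      have := hzmin hxS
      simp only [Set.mem_setOf_eq, map_smul, smul_eq_mul, hx1, mul_one] at this
      -- this : l z ≤ ‖x‖⁻¹
      rw [Metric.mem_closedBall, dist_zero_right]
      have h1 : l z * ‖x‖ ≤ 1 := by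
        have := mul_le_mul_of_nonneg_right this (le_of_lt hxn)
        rwa [inv_mul_cancel₀ (ne_of_gt hxn)] at this
      calc ‖x‖ = (l z)⁻¹ * (l z * ‖x‖) := by
            field_simp
        _ ≤ (l z)⁻¹ * 1 := by
            apply mul_le_mul_of_nonneg_left h1 (le_of_lt (inv_pos.2 hlz))
        _ = (l z)⁻¹ := mul_one _
    have hKclosed : IsClosed K :=
      isClosed_closure.inter (isClosed_singleton.preimage l.continuous)
    have hKcomp : IsCompact K :=
      (isCompact_closedBall 0 (l z)⁻¹).of_isClosed_subset hKclosed hKsub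
    have hKne : K.Nonempty := ⟨(l u0)⁻¹ • u0, subset_closure hw0, hlw0⟩
    obtain ⟨m, hmK, hmax⟩ := hKcomp.exists_isMaxOn hKne hcont.continuousOn
    have hφm : 0 < φ m := by
      have h1 : φ ((l u0)⁻¹ • u0) ≤ φ m := hmax ⟨subset_closure hw0, hlw0⟩
      have h2 := hpos _ hw0
      linarith
    have hmU : m ∈ U := by
      by_contra h
      have := hzero m h
      linarith
    -- φ x ≤ φ m * l x on U
    have hbnd : ∀ x ∈ U, φ x ≤ φ m * l x := by
      intro x hx
      have hxne : x ≠ 0 := fun h => h0U (h ▸ hx)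
      have hlx : 0 < l x := hlpos x (subset_closure hx) hxne
      have hx' : (l x)⁻¹ • x ∈ U := hcone x hx _ (inv_pos.2 hlx)
      have hlx' : l ((l x)⁻¹ • x) = 1 := by
        rw [map_smul, smul_eq_mul, inv_mul_cancel₀ (ne_of_gt hlx)]
      have := hmax ⟨subset_closure hx', hlx'⟩
      simp only [Set.mem_setOf_eq] at this
      rw [hhom _ (inv_pos.2 hlx) x] at this
      -- this : (l x)⁻¹ * φ x ≤ φ m
      have := mul_le_mul_of_nonneg_left this (le_of_lt hlx)
      rw [← mul_assoc, mul_inv_cancel₀ (ne_of_gt hlx), one_mul] at this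
      linarith [this]
    -- local max of ψ at m
    set ψ : (Fin n → ℝ) → ℝ := fun x => φ x - φ m * l x with hψ
    have hψm : ψ m = 0 := by
      have : l m = 1 := hmK.2
      simp [hψ, this]
    have hlocmax : IsLocalMax ψ m := by
      filter_upwards [hopen.mem_nhds hmU] with x hx
      rw [hψm]
      have h1 := hbnd x hx
      simp only [hψ]
      linarith
    have hld : DifferentiableAt ℝ (fun x : Fin n → ℝ => l x) m := l.differentiableAt
    have hder : fderiv ℝ ψ m = fderiv ℝ φ m - (φ m • l) := by
      have h1 : fderiv ℝ ψ m
          = fderiv ℝ φ m - fderiv ℝ (fun x : Fin n → ℝ => φ m * l x) m :=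
        fderiv_sub (hdiff m hmU) (hld.const_mul (φ m))
      have h2 : fderiv ℝ (fun x : Fin n → ℝ => φ m * l x) m
          = φ m • fderiv ℝ (fun x : Fin n → ℝ => l x) m := fderiv_const_mul hld (φ m)
      have h3 : fderiv ℝ (fun x : Fin n → ℝ => l x) m = l := l.fderiv
      rw [h1, h2, h3]
    have hzero' := hlocmax.fderiv_eq_zero
    rw [hder] at hzero'
    have hfeq : (φ m • l : (Fin n → ℝ) →L[ℝ] ℝ) = fderiv ℝ φ m :=
      (sub_eq_zero.1 hzero').symm
    refine ⟨(φ m)⁻¹, inv_pos.2 hφm, m, hmU, ?_⟩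
    rw [← hfeq, smul_smul, inv_mul_cancel₀ (ne_of_gt hφm), one_smul]
  · -- easy inclusion
    rintro l ⟨r, hr, u, hu, rfl⟩ v hv
    simp only [ContinuousLinearMap.smul_apply, smul_eq_mul]
    have := hFpos u hu v hv
    have := hpos v hv
    nlinarith
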